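/- Let p ≥ 3 be an odd integer. If m is a ρ-invariant monomial of R and u is a variable dividing m, then the polynomial u·m lies in the Hilbert ideal I_H. -/

import Mathlib

open MvPolynomial

noncomputable section

abbrev DVar (r s : ℕ) := (Fin r ⊕ Fin r) ⊕ (Fin s ⊕ Fin s)

def dswap {r s : ℕ} : DVar r s → DVar r s
  | .inl (.inl i) => .inl (.inr i)
  | .inl (.inr i) => .inl (.inl i)
  | .inr (.inl j) => .inr (.inr j)
  | .inr (.inr j) => .inr (.inl j)

def sigmaMap (F : Type*) [Field F] (r s : ℕ) :
    MvPolynomial (DVar r s) F →ₐ[F] MvPolynomial (DVar r s) F :=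
  MvPolynomial.rename dswap

def rhoCoeff {F : Type*} [Field F] {r s : ℕ} (lam : Fin r → F) : DVar r s → F
  | .inl (.inl i) => lam i
  | .inl (.inr i) => (lam i)⁻¹
  | .inr _ => 1

def rhoMap (F : Type*) [Field F] (r s : ℕ) (lam : Fin r → F) :
    MvPolynomial (DVar r s) F →ₐ[F] MvPolynomial (DVar r s) F :=
  MvPolynomial.aeval fun v => MvPolynomial.C (rhoCoeff lam v) * MvPolynomial.X v

def HilbertIdeal (F : Type*) [Field F] (r s : ℕ) (lam : Fin r → F) :
    Ideal (MvPolynomial (DVar r s) F) :=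
  Ideal.span {f | sigmaMap F r s f = f ∧ rhoMap F r s lam f = f ∧ constantCoeff f = 0}

def IsMonomial {σ F : Type*} [CommSemiring F] (f : MvPolynomial σ F) : Prop :=
  ∃ d : σ →₀ ℕ, f = monomial d 1

def GSet (F : Type*) [Field F] (r s p : ℕ) (lam : Fin r → F) :
    Set (MvPolynomial (DVar r s) F) :=
  {f | ∃ m, IsMonomial m ∧ rhoMap F r s lam m = m ∧ sigmaMap F r s m ≠ m ∧
      m.totalDegree ≤ p ∧ f = m + sigmaMap F r s m} ∪
  {f | ∃ (m : MvPolynomial (DVar r s) F) (v : DVar r s), IsMonomial m ∧ rhoMap F r s lam m = m ∧ m.totalDegree ≤ p ∧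
      X v ∣ m ∧ f = X v * m} ∪
  {f | (∃ i : Fin r, f = X (Sum.inl (Sum.inl i)) * X (Sum.inl (Sum.inr i))) ∨
       (∃ j : Fin s, f = X (Sum.inr (Sum.inl j)) * X (Sum.inr (Sum.inr j)))}

def lmExp {σ F : Type*} [CommSemiring F] (mo : MonomialOrder σ) (f : MvPolynomial σ F) :
    σ →₀ ℕ :=
  mo.toSyn.symm (f.support.sup fun d => mo.toSyn d)

lemma dswap_dswap {r s : ℕ} (v : DVar r s) : dswap (dswap v) = v := by
  rcases v with (i | i) | (j | j) <;> rfl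

lemma dswap_inj {r s : ℕ} : Function.Injective (dswap (r := r) (s := s)) :=
  Function.Involutive.injective dswap_dswap

lemma sigmaMap_X {F : Type*} [Field F] {r s : ℕ} (v : DVar r s) :
    sigmaMap F r s (X v) = X (dswap v) := by
  simp [sigmaMap]

lemma sigmaMap_sigmaMap {F : Type*} [Field F] {r s : ℕ} (f : MvPolynomial (DVar r s) F) :
    sigmaMap F r s (sigmaMap F r s f) = f := by
  simp only [sigmaMap, rename_rename]
  rw [show (dswap ∘ dswap : DVar r s → DVar r s) = id from funext dswap_dswap, rename_id, AlgHom.id_apply]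

lemma rhoCoeff_dswap {F : Type*} [Field F] {r s : ℕ} (lam : Fin r → F) (v : DVar r s) :
    rhoCoeff lam (dswap v) = (rhoCoeff lam v)⁻¹ := by
  rcases v with (i | i) | (j | j) <;> simp [rhoCoeff, dswap]

lemma rhoMap_X {F : Type*} [Field F] {r s : ℕ} (lam : Fin r → F) (v : DVar r s) :
    rhoMap F r s lam (X v) = C (rhoCoeff lam v) * X v := by
  simp [rhoMap]

lemma rhoMap_monomial {F : Type*} [Field F] {r s : ℕ} (lam : Fin r → F)
    (d : DVar r s →₀ ℕ) (c : F) :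
    rhoMap F r s lam (monomial d c) =
      C (d.prod fun v k => rhoCoeff lam v ^ k) * monomial d c := by
  rw [rhoMap, aeval_monomial, monomial_eq]
  simp only [mul_pow, ← C_pow]
  rw [Finsupp.prod_mul, map_finsuppProd]
  simp only [algebraMap_eq]
  ring

/-- For `p ≥ 3` an odd integer, if `m` is a `ρ`-invariant monomial and `u` is a
variable dividing `m`, then `u·m` lies in the Hilbert ideal `I_H`. -/
theorem var_mul_rho_invariant_monomial_mem_hilbertIdeal
    {F : Type*} [Field F] [CharP F 2] {r s p : ℕ} (hp : 3 ≤ p) (hodd : Odd p)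
    (ζ : F) (hζ : IsPrimitiveRoot ζ p)
    (lam : Fin r → F) (hlam : ∀ i, lam i ^ p = 1 ∧ lam i ≠ 1)
    (m : MvPolynomial (DVar r s) F) (hm : IsMonomial m) (hρ : rhoMap F r s lam m = m)
    (u : DVar r s) (hu : X u ∣ m) :
    X u * m ∈ HilbertIdeal F r s lam := by
  obtain ⟨d, rfl⟩ := hm
  -- extract exponent
  have hdu : d u ≠ 0 := by
    rcases X_dvd_monomial.mp hu with h | h
    · exact absurd h one_ne_zero
    · exact h
  have hd0 : d ≠ 0 := fun h => hdu (by simp [h])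
  set d' : DVar r s →₀ ℕ := d - Finsupp.single u 1 with hd'
  have hle : Finsupp.single u 1 ≤ d := by
    rw [Finsupp.single_le_iff]; omega
  have hdd : Finsupp.single u 1 + d' = d := add_tsub_cancel_of_le hle
  have hsplit : monomial d (1 : F) = X u * monomial d' 1 := by
    rw [X, monomial_mul, one_mul, hdd]
  -- the ρ-scaling factor of m is 1
  have hc : (d.prod fun v k => rhoCoeff lam v ^ k) = 1 := by
    have h1 := hρ
    rw [rhoMap_monomial, C_mul_monomial, mul_one] at h1
    have := congrArg (coeff d) h1
    simpa [coeff_monomial] using this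
  -- lam values are nonzero
  have hne : ∀ v : DVar r s, rhoCoeff lam v ≠ 0 := by
    have hlam0 : ∀ i, lam i ≠ 0 := fun i h => by
      have h1 := (hlam i).1
      rw [h, zero_pow (by omega)] at h1
      exact zero_ne_one h1
    intro v
    rcases v with (i | i) | (j | j)
    · exact hlam0 i
    · exact inv_ne_zero (hlam0 i)
    · exact one_ne_zero
    · exact one_ne_zero
  -- σ(m) is also ρ-invariant
  set e : DVar r s →₀ ℕ := d.mapDomain dswap with he
  have hσm : sigmaMap F r s (monomial d 1) = monomial e 1 := by
    simp [sigmaMap, rename_monomial, he]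
  have hcσ : (e.prod fun v k => rhoCoeff lam v ^ k) = 1 := by
    rw [he, Finsupp.prod_mapDomain_index_inj dswap_inj]
    have heq : (d.prod fun v k => rhoCoeff lam (dswap v) ^ k)
        = (d.prod fun v k => rhoCoeff lam v ^ k)⁻¹ := by
      rw [Finsupp.prod, Finsupp.prod, ← Finset.prod_inv_distrib]
      refine Finset.prod_congr rfl fun v _ => ?_
      rw [rhoCoeff_dswap, inv_pow]
    rw [heq, hc, inv_one]
  have hρσ : rhoMap F r s lam (sigmaMap F r s (monomial d 1)) = sigmaMap F r s (monomial d 1) := by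
    rw [hσm, rhoMap_monomial, hcσ, map_one, one_mul]
  set A := monomial d (1 : F) + sigmaMap F r s (monomial d 1) with hA
  have hAmem : A ∈ {f : MvPolynomial (DVar r s) F |
      sigmaMap F r s f = f ∧ rhoMap F r s lam f = f ∧ constantCoeff f = 0} := by
    refine ⟨?_, ?_, ?_⟩
    · rw [hA, map_add, sigmaMap_sigmaMap, add_comm]
    · rw [hA, map_add, hρ, hρσ]
    · rw [hA, map_add, sigmaMap, constantCoeff_rename]
      simp [constantCoeff_monomial, hd0]
  set B : MvPolynomial (DVar r s) F := X u * X (dswap u) with hB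
  have hBmem : B ∈ {f : MvPolynomial (DVar r s) F |
      sigmaMap F r s f = f ∧ rhoMap F r s lam f = f ∧ constantCoeff f = 0} := by
    refine ⟨?_, ?_, ?_⟩
    · rw [hB, map_mul, sigmaMap_X, sigmaMap_X, dswap_dswap, mul_comm]
    · rw [hB, map_mul, rhoMap_X, rhoMap_X, rhoCoeff_dswap, mul_mul_mul_comm, ← C_mul,
        mul_inv_cancel₀ (hne u), C_1, one_mul]
    · simp [hB]
  have key : X u * monomial d 1 = X u * A + sigmaMap F r s (monomial d' 1) * B := by
    have hσsplit : sigmaMap F r s (monomial d 1)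
        = X (dswap u) * sigmaMap F r s (monomial d' 1) := by
      rw [hsplit, map_mul, sigmaMap_X]
    rw [hA, hB, hσsplit]
    have hz : X u * (X (dswap u) * sigmaMap F r s (monomial d' 1))
        + sigmaMap F r s (monomial d' 1) * (X u * X (dswap u)) = 0 := by
      rw [show sigmaMap F r s (monomial d' 1) * (X u * X (dswap u))
          = X u * (X (dswap u) * sigmaMap F r s (monomial d' 1)) by ring]
      exact CharTwo.add_self_eq_zero _
    rw [mul_add, add_assoc, hz, add_zero]
  rw [key, HilbertIdeal]
  exact Ideal.add_mem _ (Ideal.mul_mem_left _ _ (Ideal.subset_span hAmem))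
    (Ideal.mul_mem_left _ _ (Ideal.subset_span hBmem))
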